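/- Let $V$ be a Banach space, $\mu > 1$, and let $h : \{(s,u,t) : 0 \le s \le u \le t \le T\} \to V$ satisfy $h = \delta R$ for some continuous $R : [0,T]^2 \to V$ vanishing on the diagonal, together with the bound $\|h_{t,u,s}\| \le M |u - s|^{\rho} |t - u|^{\mu - \rho}$ for some $0 < \rho < \mu$. If $R' : [0,T]^2 \to V$ also satisfies $\delta R' = h$ and $\|R'_{t,s}\| \le M' |t-s|^{\mu}$, and $\|R_{t,s}\| \le M'' |t-s|^{\mu}$, then $R = R'$. -/

import Mathlib

/-- Uniqueness part of the sewing lemma: if `R` and `R'` are two-parameter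
functions on `[0,T]` with the same coboundary `h = δR = δR'` (on ordered
triples), `h` satisfies a bound of Hölder type of total exponent `μ > 1`, and
both `R` and `R'` are Hölder of exponent `μ`, then `R = R'`. -/
theorem sewing_uniqueness {V : Type*} [NormedAddCommGroup V] [NormedSpace ℝ V]
    (T μ ρ M M' M'' : ℝ) (hT : 0 ≤ T) (hμ : 1 < μ) (hρ : 0 < ρ) (hρμ : ρ < μ)
    (R R' : ℝ → ℝ → V)
    (hcont : Continuous fun p : ℝ × ℝ => R p.1 p.2)
    (hdiag : ∀ t, R t t = 0)
    (hh : ∀ s u t : ℝ, s ∈ Set.Icc 0 T → u ∈ Set.Icc 0 T → t ∈ Set.Icc 0 T →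
      s ≤ u → u ≤ t →
      ‖R t s - R t u - R u s‖ ≤ M * (u - s) ^ ρ * (t - u) ^ (μ - ρ))
    (hcob : ∀ s u t : ℝ, s ∈ Set.Icc 0 T → u ∈ Set.Icc 0 T → t ∈ Set.Icc 0 T →
      s ≤ u → u ≤ t →
      R' t s - R' t u - R' u s = R t s - R t u - R u s)
    (hR' : ∀ s t : ℝ, s ∈ Set.Icc 0 T → t ∈ Set.Icc 0 T →
      ‖R' t s‖ ≤ M' * |t - s| ^ μ)
    (hR : ∀ s t : ℝ, s ∈ Set.Icc 0 T → t ∈ Set.Icc 0 T →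
      ‖R t s‖ ≤ M'' * |t - s| ^ μ) :
    ∀ s t : ℝ, s ∈ Set.Icc 0 T → t ∈ Set.Icc 0 T → s ≤ t → R t s = R' t s := by
  intro s t hs ht hst
  have group_key : ∀ x y z x' y' z' : V, x' - y' - z' = x - y - z →
      x - x' = (y - y') + (z - z') := by
    intro x y z x' y' z' h
    rw [← sub_eq_zero, show x - x' - (y - y' + (z - z')) =
      (x - y - z) - (x' - y' - z') from by abel, ← h, sub_self]
  set D : ℝ → ℝ → V := fun b a => R b a - R' b a with hDdef
  have hadd : ∀ a b c : ℝ, a ∈ Set.Icc 0 T → b ∈ Set.Icc 0 T → c ∈ Set.Icc 0 T →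
      a ≤ b → b ≤ c → D c a = D c b + D b a := by
    intro a b c ha hb hc hab hbc
    exact group_key _ _ _ _ _ _ (hcob a b c ha hb hc hab hbc)
  have hμ0 : μ ≠ 0 := by linarith
  have hDss : D s s = 0 := by
    have h1 := hR' s s hs hs
    simp only [sub_self, abs_zero, Real.zero_rpow hμ0, mul_zero] at h1
    have h2 : R' s s = 0 := norm_le_zero_iff.mp h1
    simp [hDdef, hdiag, h2]
  have hDbound : ∀ a b : ℝ, a ∈ Set.Icc 0 T → b ∈ Set.Icc 0 T →
      ‖D b a‖ ≤ (M'' + M') * |b - a| ^ μ := by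
    intro a b ha hb
    calc ‖R b a - R' b a‖ ≤ ‖R b a‖ + ‖R' b a‖ := norm_sub_le _ _
      _ ≤ M'' * |b - a| ^ μ + M' * |b - a| ^ μ :=
          add_le_add (hR a b ha hb) (hR' a b ha hb)
      _ = (M'' + M') * |b - a| ^ μ := by ring
  have key : ∀ n : ℕ, 0 < n →
      ‖D t s‖ ≤ (M'' + M') * (t - s) ^ μ * (n : ℝ) ^ (1 - μ) := by
    intro n hn
    have hn' : (0:ℝ) < n := by exact_mod_cast hn
    set δ : ℝ := (t - s) / n with hδ
    have hδ0 : 0 ≤ δ := div_nonneg (by linarith) hn'.le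
    set p : ℕ → ℝ := fun i => s + i * δ with hp
    have hmono : ∀ i : ℕ, p i ≤ p (i+1) := by
      intro i
      simp only [hp]
      push_cast
      nlinarith
    have hpd : ∀ i : ℕ, p (i+1) - p i = δ := by
      intro i
      simp only [hp]
      push_cast
      ring
    have hnδ : (n:ℝ) * δ = t - s := by
      rw [hδ, mul_div_assoc']
      exact mul_div_cancel_left₀ _ hn'.ne'
    have hmem : ∀ k : ℕ, k ≤ n → p k ∈ Set.Icc 0 T := by
      intro k hk
      have h1 : s ≤ p k := by
        simp only [hp]
        nlinarith [mul_nonneg (Nat.cast_nonneg (α := ℝ) k) hδ0]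
      have h2 : p k ≤ t := by
        have h3 : (k:ℝ) * δ ≤ n * δ :=
          mul_le_mul_of_nonneg_right (by exact_mod_cast hk) hδ0
        simp only [hp]
        linarith
      exact ⟨le_trans hs.1 h1, le_trans h2 ht.2⟩
    have hsle : ∀ k : ℕ, s ≤ p k := by
      intro k
      simp only [hp]
      nlinarith [mul_nonneg (Nat.cast_nonneg (α := ℝ) k) hδ0]
    have hpn : p n = t := by
      simp only [hp]
      linarith
    have htel : ∀ k : ℕ, k ≤ n →
        D (p k) s = ∑ i ∈ Finset.range k, D (p (i+1)) (p i) := by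
      intro k
      induction k with
      | zero =>
        intro _
        have : p 0 = s := by simp [hp]
        simp [this, hDss]
      | succ k ih =>
        intro hk
        have hk' : k ≤ n := Nat.le_of_succ_le hk
        rw [Finset.sum_range_succ, ← ih hk',
          hadd s (p k) (p (k+1)) hs (hmem k hk') (hmem (k+1) hk) (hsle k) (hmono k)]
        abel
    have hsum : ‖D t s‖ ≤ (n:ℝ) * ((M'' + M') * δ ^ μ) := by
      rw [← hpn, htel n le_rfl]
      calc ‖∑ i ∈ Finset.range n, D (p (i+1)) (p i)‖
          ≤ ∑ i ∈ Finset.range n, ‖D (p (i+1)) (p i)‖ := norm_sum_le _ _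
        _ ≤ ∑ _i ∈ Finset.range n, (M'' + M') * δ ^ μ := by
            apply Finset.sum_le_sum
            intro i hi
            have hi' : i + 1 ≤ n := Finset.mem_range.mp hi
            have hb := hDbound (p i) (p (i+1)) (hmem i (Nat.le_of_succ_le hi')) (hmem (i+1) hi')
            rwa [hpd i, abs_of_nonneg hδ0] at hb
        _ = (n:ℝ) * ((M'' + M') * δ ^ μ) := by
            rw [Finset.sum_const, Finset.card_range, nsmul_eq_mul]
    have harith : (n:ℝ) * ((M'' + M') * δ ^ μ)
        = (M'' + M') * (t - s) ^ μ * (n:ℝ) ^ (1 - μ) := by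
      have h1 : δ ^ μ = (t - s) ^ μ / (n:ℝ) ^ μ := by
        rw [hδ, Real.div_rpow (by linarith) hn'.le]
      have h2 : (n:ℝ) ^ (1 - μ) = (n:ℝ) / (n:ℝ) ^ μ := by
        rw [Real.rpow_sub hn', Real.rpow_one]
      rw [h1, h2]
      ring
    linarith [hsum, harith.le, harith.ge]
  have hlim : Filter.Tendsto
      (fun n : ℕ => (M'' + M') * (t - s) ^ μ * (n:ℝ) ^ (1 - μ))
      Filter.atTop (nhds 0) := by
    have h1 : Filter.Tendsto (fun n : ℕ => (n:ℝ) ^ (1 - μ)) Filter.atTop (nhds 0) := by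
      have h2 := (tendsto_rpow_neg_atTop (by linarith : (0:ℝ) < μ - 1)).comp
        (tendsto_natCast_atTop_atTop : Filter.Tendsto (Nat.cast : ℕ → ℝ) Filter.atTop Filter.atTop)
      simpa [Function.comp_def, neg_sub] using h2
    simpa using h1.const_mul ((M'' + M') * (t - s) ^ μ)
  have hle0 : ‖D t s‖ ≤ 0 := by
    apply ge_of_tendsto hlim
    filter_upwards [Filter.eventually_gt_atTop 0] with n hn
    exact key n hn
  have hD0 : D t s = 0 := by
    simpa using norm_le_zero_iff.mp hle0
  exact sub_eq_zero.mp hD0
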